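/- Let n ≥ 3, m ≥ 1+δ > 1, and define the weighted Weyl curvature A = W + (m/((m+n-2)(n-2))) Ric₀∧g + (m/(2(m+n-1)(m+n-2)))·((m-1)R/(n(n-1)) + μ)·g∧g with μ = 1. Then |A|² ≤ |Rm + (1/(2(m-1))) g∧g|² ≤ C(n,δ)·|A|² where C = ((m+n-1)(m+n-2)/(m(m-1)))² and moreover C ≥ 1 and C is bounded above in terms of n and δ alone. -/

import Mathlib

set_option maxHeartbeats 1000000


open RealInnerProductSpace

/-- Comparison of the norms of the weighted Weyl curvature
`A = W + (m/((m+n-2)(n-2)))·Ric₀∧g + (m/(2(m+n-1)(m+n-2)))·((m-1)R/(n(n-1)) + 1)·g∧g`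
(characteristic constant `μ = 1`) and the shifted Riemann curvature
`Rm + (1/(2(m-1)))·g∧g`, for `n ≥ 3` and `m ≥ 1+δ > 1`:
`|A|² ≤ |Rm + (1/(2(m-1)))g∧g|² ≤ C|A|²` with
`C = ((m+n-1)(m+n-2)/(m(m-1)))²`, and `C ≥ 1` is bounded above in terms of `n` and `δ`
alone, namely `C ≤ ((δ+n)(δ+n-1)/((1+δ)δ))²`.
The orthogonal Ricci decomposition data is as in the norm identity:
the pieces `W`, `Rw = Ric₀∧g`, `G = g∧g` are pairwise orthogonal with
`|Rw|² = (n-2)|Ric₀|²` and `|G|² = 2n(n-1)`. -/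
theorem weighted_weyl_norm_comparison {V : Type*} [NormedAddCommGroup V]
    [InnerProductSpace ℝ V]
    (n m δ R Ric0sq : ℝ) (hn : 3 ≤ n) (hδ : 0 < δ) (hm : 1 + δ ≤ m)
    (hRic0sq : 0 ≤ Ric0sq)
    (W Rw G Rm A : V)
    (horth1 : ⟪W, Rw⟫ = 0) (horth2 : ⟪W, G⟫ = 0) (horth3 : ⟪Rw, G⟫ = 0)
    (hRw : ⟪Rw, Rw⟫ = (n - 2) * Ric0sq)
    (hG : ⟪G, G⟫ = 2 * n * (n - 1))
    (hRm : Rm = W + (1 / (n - 2)) • Rw + (R / (2 * n * (n - 1))) • G)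
    (hA : A = W + (m / ((m + n - 2) * (n - 2))) • Rw
        + ((m / (2 * (m + n - 1) * (m + n - 2))) * ((m - 1) * R / (n * (n - 1)) + 1)) • G) :
    ‖A‖ ^ 2 ≤ ‖Rm + (1 / (2 * (m - 1))) • G‖ ^ 2 ∧
    ‖Rm + (1 / (2 * (m - 1))) • G‖ ^ 2
      ≤ ((m + n - 1) * (m + n - 2) / (m * (m - 1))) ^ 2 * ‖A‖ ^ 2 ∧
    1 ≤ ((m + n - 1) * (m + n - 2) / (m * (m - 1))) ^ 2 ∧
    ((m + n - 1) * (m + n - 2) / (m * (m - 1))) ^ 2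
      ≤ ((δ + n) * (δ + n - 1) / ((1 + δ) * δ)) ^ 2 := by
  have hn2 : (1:ℝ) ≤ n - 2 := by linarith
  have hn2' : (0:ℝ) < n - 2 := by linarith
  have hm1 : (0:ℝ) < m - 1 := by linarith
  have hp : (0:ℝ) < m + n - 2 := by linarith
  have hq : (0:ℝ) < m + n - 1 := by linarith
  have hm0 : (0:ℝ) < m := by linarith
  have hn1 : (0:ℝ) < n - 1 := by linarith
  have hn0 : (0:ℝ) < n := by linarith
  have key : ∀ (a b : ℝ), ‖W + a • Rw + b • G‖ ^ 2
      = ⟪W, W⟫ + a ^ 2 * ((n - 2) * Ric0sq) + b ^ 2 * (2 * n * (n - 1)) := by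
    intro a b
    have horth1' : ⟪Rw, W⟫ = 0 := by rw [real_inner_comm]; exact horth1
    have horth2' : ⟪G, W⟫ = 0 := by rw [real_inner_comm]; exact horth2
    have horth3' : ⟪G, Rw⟫ = 0 := by rw [real_inner_comm]; exact horth3
    rw [← real_inner_self_eq_norm_sq]
    simp only [inner_add_left, inner_add_right, real_inner_smul_left,
      real_inner_smul_right, horth1, horth2, horth3, horth1', horth2', horth3', hRw, hG]
    ring
  have hB : Rm + (1 / (2 * (m - 1))) • G
      = W + (1 / (n - 2)) • Rw + (R / (2 * n * (n - 1)) + 1 / (2 * (m - 1))) • G := by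
    rw [hRm]; module
  -- opaque abbreviations
  obtain ⟨w, hwdef⟩ : ∃ x : ℝ, x = ⟪W, W⟫ := ⟨_, rfl⟩
  obtain ⟨S, hSdef⟩ : ∃ x : ℝ, x = (n - 2) * Ric0sq := ⟨_, rfl⟩
  obtain ⟨T, hTdef⟩ : ∃ x : ℝ, x = 2 * n * (n - 1) := ⟨_, rfl⟩
  obtain ⟨cG, hcGdef⟩ : ∃ x : ℝ, x = R / (2 * n * (n - 1)) + 1 / (2 * (m - 1)) := ⟨_, rfl⟩
  obtain ⟨t, htdef⟩ : ∃ x : ℝ, x = m * (m - 1) / ((m + n - 1) * (m + n - 2)) := ⟨_, rfl⟩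
  obtain ⟨c, hcdef⟩ : ∃ x : ℝ, x = (m + n - 1) * (m + n - 2) / (m * (m - 1)) := ⟨_, rfl⟩
  obtain ⟨a2, ha2def⟩ : ∃ x : ℝ, x = 1 / (n - 2) := ⟨_, rfl⟩
  obtain ⟨a1, ha1def⟩ : ∃ x : ℝ, x = m / ((m + n - 2) * (n - 2)) := ⟨_, rfl⟩
  have hw : 0 ≤ w := hwdef ▸ real_inner_self_nonneg
  have hS : 0 ≤ S := hSdef ▸ mul_nonneg (by linarith) hRic0sq
  have hT : 0 < T := by rw [hTdef]; positivity
  have hcA : (m / (2 * (m + n - 1) * (m + n - 2))) * ((m - 1) * R / (n * (n - 1)) + 1)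
      = t * cG := by
    rw [htdef, hcGdef]; field_simp
  have hBsq : ‖Rm + (1 / (2 * (m - 1))) • G‖ ^ 2 = w + a2 ^ 2 * S + cG ^ 2 * T := by
    rw [hB, key, hwdef, hSdef, hTdef, hcGdef, ha2def]
  have hAsq : ‖A‖ ^ 2 = w + a1 ^ 2 * S + (t * cG) ^ 2 * T := by
    rw [hA, hcA, key, hwdef, hSdef, hTdef, ha1def]
  have haA : a1 ≤ a2 := by
    rw [ha1def, ha2def, div_le_div_iff₀ (by positivity) hn2']
    linarith [sq_nonneg (n - 2), mul_pos hn2' hn2']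
  have haA0 : 0 ≤ a1 := by rw [ha1def]; positivity
  have haA2 : a1 ^ 2 ≤ a2 ^ 2 := pow_le_pow_left₀ haA0 haA 2
  have ht0 : 0 ≤ t := by rw [htdef]; positivity
  have ht1 : t ≤ 1 := by
    rw [htdef, div_le_one (by positivity)]
    linarith [mul_pos hm0 hn1, mul_pos hn1 hn2']
  have ht2 : t ^ 2 ≤ 1 := by simpa using pow_le_pow_left₀ ht0 ht1 2
  have hc1 : (1:ℝ) ≤ c := by
    rw [hcdef, le_div_iff₀ (by positivity)]
    linarith [mul_pos hm0 hn1, mul_pos hn1 hn2']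
  have hC1 : (1:ℝ) ≤ c ^ 2 := by simpa using pow_le_pow_left₀ zero_le_one hc1 2
  have hCt : c ^ 2 * t ^ 2 = 1 := by
    rw [hcdef, htdef]; field_simp
  have hca : a2 ≤ c * a1 := by
    rw [ha1def, ha2def, hcdef, div_mul_div_comm, div_le_div_iff₀ hn2' (by positivity)]
    linarith [mul_pos (mul_pos (mul_pos hm0 hn2') hp) hn0]
  have hCa : a2 ^ 2 ≤ c ^ 2 * a1 ^ 2 := by
    have h0 : 0 ≤ a2 := by rw [ha2def]; positivity
    have h1 := pow_le_pow_left₀ h0 hca 2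
    rwa [mul_pow] at h1
  have hgoaleq : ((m + n - 1) * (m + n - 2) / (m * (m - 1))) ^ 2 = c ^ 2 := by rw [hcdef]
  rw [hgoaleq, hBsq, hAsq]
  refine ⟨?_, ?_, hC1, ?_⟩
  · have h1 : a1 ^ 2 * S ≤ a2 ^ 2 * S := mul_le_mul_of_nonneg_right haA2 hS
    have h2 : (t * cG) ^ 2 * T ≤ cG ^ 2 * T := by
      apply mul_le_mul_of_nonneg_right _ hT.le
      linarith [mul_nonneg (by linarith : (0:ℝ) ≤ 1 - t ^ 2) (sq_nonneg cG)]
    linarith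
  · have h1 : a2 ^ 2 * S ≤ c ^ 2 * (a1 ^ 2 * S) := by
      rw [← mul_assoc]; exact mul_le_mul_of_nonneg_right hCa hS
    have h2 : c ^ 2 * ((t * cG) ^ 2 * T) = cG ^ 2 * T := by
      have : c ^ 2 * ((t * cG) ^ 2 * T) = (c ^ 2 * t ^ 2) * (cG ^ 2 * T) := by ring
      rw [this, hCt, one_mul]
    have h3 : w ≤ c ^ 2 * w := le_mul_of_one_le_left hw hC1
    have heq : c ^ 2 * (w + a1 ^ 2 * S + (t * cG) ^ 2 * T)
        = c ^ 2 * w + c ^ 2 * (a1 ^ 2 * S) + c ^ 2 * ((t * cG) ^ 2 * T) := by ring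
    linarith
  · have hb : c ≤ (δ + n) * (δ + n - 1) / ((1 + δ) * δ) := by
      rw [hcdef, div_le_div_iff₀ (by positivity) (by positivity)]
      have hs : (0:ℝ) ≤ m - 1 - δ := by linarith
      have hv : (0:ℝ) ≤ n - 3 := by linarith
      have hd : (0:ℝ) ≤ δ := hδ.le
      linarith [hs, mul_nonneg hs hv, mul_nonneg (mul_nonneg hs hv) hv,
        mul_nonneg hs hd, mul_nonneg (mul_nonneg hs hd) hv,
        mul_nonneg (mul_nonneg (mul_nonneg hs hd) hv) hv,
        mul_nonneg (mul_nonneg hs hd) hd,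
        mul_nonneg (mul_nonneg (mul_nonneg hs hd) hd) hv,
        mul_nonneg hs hs, mul_nonneg (mul_nonneg hs hs) hv,
        mul_nonneg (mul_nonneg (mul_nonneg hs hs) hv) hv,
        mul_nonneg (mul_nonneg hs hs) hd,
        mul_nonneg (mul_nonneg (mul_nonneg hs hs) hd) hv]
    have hc0 : (0:ℝ) ≤ c := by linarith
    exact pow_le_pow_left₀ hc0 hb 2
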